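/- The only monic reciprocal integer polynomials of degree 4 possessing a Perron root strictly less than the Perron root of x^4 - 2x^3 - 2x + 1 are: x^4 - x^3 - x^2 - x + 1, x^4 - 2x^3 + x^2 - 2x + 1, x^4 - x^3 - 2x^2 - x + 1, and x^4 - 3x^3 + 3x^2 - 3x + 1. -/

import Mathlib

open Polynomial

/-- The monic reciprocal quartic `x^4 + α x^3 + β x^2 + α x + 1`. -/
noncomputable def quartic (α β : ℤ) : Polynomial ℤ :=
  X ^ 4 + C α * X ^ 3 + C β * X ^ 2 + C α * X + 1

/-- `l` is a Perron root of `P`: a real root `l > 1` strictly dominating all other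
complex roots in absolute value. -/
def IsPerronRootOf (l : ℝ) (P : Polynomial ℤ) : Prop :=
  1 < l ∧ Polynomial.aeval l P = 0 ∧
    ∀ z : ℂ, Polynomial.aeval z P = 0 → z ≠ (l : ℂ) → ‖z‖ < l

lemma aeval_quartic_real (α β : ℤ) (x : ℝ) :
    Polynomial.aeval x (quartic α β) = x^4 + α*x^3 + β*x^2 + α*x + 1 := by
  simp [quartic]

lemma aeval_quartic_complex (α β : ℤ) (x : ℂ) :
    Polynomial.aeval x (quartic α β) = x^4 + α*x^3 + β*x^2 + α*x + 1 := by
  simp [quartic]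

lemma mono_lemma {t u : ℝ} (ht : 1 < t) (htu : t < u) : t + 1/t < u + 1/u := by
  have ht0 : 0 < t := by linarith
  have hu0 : 0 < u := by linarith
  have h1 : t * (1/t) = 1 := by field_simp
  have h2 : u * (1/u) = 1 := by field_simp
  nlinarith [mul_pos (sub_pos.2 htu) (mul_pos ht0 hu0), mul_pos ht0 hu0,
    mul_pos (sub_pos.2 htu) (show (0:ℝ) < t*u - 1 by nlinarith)]

set_option maxHeartbeats 2000000 in
lemma forward (α β : ℤ) (l : ℝ) (hl : IsPerronRootOf l (quartic α β))
    (hy1lt : l + 1/l < 1 + Real.sqrt 3) :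
    (α, β) = (-1, -1) ∨ (α, β) = (-2, 1) ∨ (α, β) = (-1, -2) ∨ (α, β) = (-3, 3) := by
  obtain ⟨hl1, hl0, hldom⟩ := hl
  rw [aeval_quartic_real] at hl0
  have h3sq : Real.sqrt 3 ^ 2 = 3 := Real.sq_sqrt (by norm_num)
  have h3nn : (0:ℝ) ≤ Real.sqrt 3 := Real.sqrt_nonneg 3
  have h3lb : (1.7:ℝ) < Real.sqrt 3 := by nlinarith
  have h3ub : Real.sqrt 3 < 1.8 := by nlinarith
  have hlpos : (0:ℝ) < l := by linarith
  have hlinv : l * (1/l) = 1 := by field_simp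
  obtain ⟨y1, hy1def⟩ : ∃ y:ℝ, y = l + 1/l := ⟨_, rfl⟩
  obtain ⟨y2, hy2def⟩ : ∃ y:ℝ, y = -α - y1 := ⟨_, rfl⟩
  have hy1gt : 2 < y1 := by
    rw [hy1def]
    nlinarith [mul_pos (sub_pos.2 hl1) (sub_pos.2 hl1), hlinv]
  have hy1lt' : y1 < 1 + Real.sqrt 3 := by rw [hy1def]; exact hy1lt
  have hquad : y1^2 + α*y1 + (β - 2) = 0 := by
    rw [hy1def]
    have h2 : l ≠ 0 := ne_of_gt hlpos
    field_simp
    nlinarith [hl0]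
  have hsum : y1 + y2 = -α := by rw [hy2def]; ring
  have hprod : y1 * y2 = β - 2 := by rw [hy2def]; nlinarith [hquad]
  -- any root of t² - y2 t + 1 is a root of the quartic
  have hroot : ∀ μ : ℝ, μ^2 - y2*μ + 1 = 0 → Polynomial.aeval (μ:ℂ) (quartic α β) = 0 := by
    intro μ hμ
    have hαr : (α:ℝ) = -(y1 + y2) := by linarith
    have hβr : (β:ℝ) = 2 + y1*y2 := by linarith
    have hr : μ^4 + (α:ℝ)*μ^3 + (β:ℝ)*μ^2 + (α:ℝ)*μ + 1 = 0 := by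
      rw [hαr, hβr]
      linear_combination (μ^2 - y1*μ + 1) * hμ
    rw [aeval_quartic_complex]
    exact_mod_cast congrArg Complex.ofReal hr
  -- upper bound: y2 ≤ y1
  have hy2ub : y2 ≤ y1 := by
    by_cases hc2 : y2 ≤ 2
    · linarith
    · push_neg at hc2
      obtain ⟨d, hddef⟩ : ∃ d:ℝ, d = Real.sqrt (y2^2 - 4) := ⟨_, rfl⟩
      have hd : d^2 = y2^2 - 4 := by rw [hddef]; exact Real.sq_sqrt (by nlinarith)
      have hd0 : 0 ≤ d := hddef ▸ Real.sqrt_nonneg _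
      obtain ⟨μ, hμdef⟩ : ∃ μ:ℝ, μ = (y2 + d)/2 := ⟨_, rfl⟩
      have hμ1 : 1 < μ := by rw [hμdef]; nlinarith
      have hμeq : μ^2 - y2*μ + 1 = 0 := by rw [hμdef]; nlinarith [hd]
      have hμ0 : (0:ℝ) < μ := by linarith
      have hμy : μ + 1/μ = y2 := by field_simp; nlinarith [hμeq]
      by_cases hne : (μ:ℂ) = (l:ℂ)
      · have : μ = l := by exact_mod_cast hne
        rw [← hμy, this, ← hy1def]
      · have habs := hldom _ (hroot μ hμeq) hne
        rw [Complex.norm_real, Real.norm_eq_abs, abs_of_pos hμ0] at habs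
        have := mono_lemma hμ1 habs
        rw [hμy, ← hy1def] at this
        linarith
  -- lower bound: -y1 < y2
  have hy2lb : -y1 < y2 := by
    by_cases hc2 : -2 ≤ y2
    · linarith
    · push_neg at hc2
      obtain ⟨d, hddef⟩ : ∃ d:ℝ, d = Real.sqrt (y2^2 - 4) := ⟨_, rfl⟩
      have hd : d^2 = y2^2 - 4 := by rw [hddef]; exact Real.sq_sqrt (by nlinarith)
      have hd0 : 0 ≤ d := hddef ▸ Real.sqrt_nonneg _
      obtain ⟨μ, hμdef⟩ : ∃ μ:ℝ, μ = (y2 - d)/2 := ⟨_, rfl⟩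
      have hμ1 : μ < -1 := by rw [hμdef]; nlinarith
      have hμeq : μ^2 - y2*μ + 1 = 0 := by rw [hμdef]; nlinarith [hd]
      have hμ0 : μ < 0 := by linarith
      have hμy : μ + 1/μ = y2 := by
        have : μ ≠ 0 := ne_of_lt hμ0
        field_simp
        nlinarith [hμeq]
      have hne : (μ:ℂ) ≠ (l:ℂ) := by
        intro h
        have : μ = l := by exact_mod_cast h
        linarith
      have habs := hldom _ (hroot μ hμeq) hne
      rw [Complex.norm_real, Real.norm_eq_abs, abs_of_neg hμ0] at habs
      have hm1 : 1 < -μ := by linarith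
      have := mono_lemma hm1 habs
      have hinvμ : 1/(-μ) = -(1/μ) := by rw [div_neg]
      rw [hinvμ, ← hy1def] at this
      linarith [hμy]
  -- integer bounds on α
  have hαub : (-6:ℝ) < α := by
    have : (α:ℝ) = -(y1+y2) := by linarith
    nlinarith [h3ub]
  have hαlb : (α:ℝ) < 0 := by nlinarith
  have hα1 : -5 ≤ α := by
    have : (-6:ℤ) < α := by exact_mod_cast hαub
    omega
  have hα2 : α ≤ -1 := by
    have : α < (0:ℤ) := by exact_mod_cast hαlb
    omega
  have hy2lt' : y2 < 1 + Real.sqrt 3 := by linarith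
  have hE : (β:ℝ) - 2 + (4 + 2*Real.sqrt 3) > (1 + Real.sqrt 3) * (-(α:ℝ)) := by
    have h1 : (0:ℝ) < (1 + Real.sqrt 3) - y1 := by linarith
    have h2 : (0:ℝ) < (1 + Real.sqrt 3) - y2 := by linarith
    have h3 := mul_pos h1 h2
    nlinarith [h3sq, hsum, hprod]
  have hAM : 4*((β:ℝ) - 2) ≤ (α:ℝ)^2 := by nlinarith [sq_nonneg (y1 - y2), hsum, hprod]
  have hQ2 : -4 ≤ α → (β:ℝ) - 2 < 2*(-(α:ℝ)) - 4 := by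
    intro h
    have h' : (-4:ℝ) ≤ (α:ℝ) := by exact_mod_cast h
    have hy2 : y2 < 2 := by nlinarith [hsum, hy1gt]
    nlinarith [mul_pos (show (0:ℝ) < y1 - 2 by linarith) (show (0:ℝ) < 2 - y2 by linarith),
      hsum, hprod]
  clear hl0 hldom hroot hquad hsum hprod hy2ub hy2lb hy2lt' hy1gt hy1lt' hy1lt
    hlinv hlpos hl1 hαub hαlb hy2def hy1def
  clear y1 y2 l
  interval_cases α <;> push_cast at hE hAM hQ2
  · -- α = -5
    exfalso
    have hb1 : (8:ℤ) < β := by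
      exact_mod_cast (show ((8:ℤ):ℝ) < (β:ℝ) by push_cast; nlinarith [h3lb])
    have hb2 : ((β:ℤ):ℝ) < 9 := by nlinarith [hAM]
    have hb2' : β < 9 := by exact_mod_cast hb2
    omega
  · -- α = -4
    exfalso
    have hq2 := hQ2 (by norm_num)
    have hb1 : (5:ℤ) < β := by
      exact_mod_cast (show ((5:ℤ):ℝ) < (β:ℝ) by push_cast; nlinarith [h3lb])
    have hb2 : ((β:ℤ):ℝ) < 6 := by nlinarith [hq2]
    have hb2' : β < 6 := by exact_mod_cast hb2
    omega
  · -- α = -3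
    have hq2 := hQ2 (by norm_num)
    have hb1 : (2:ℤ) < β := by
      exact_mod_cast (show ((2:ℤ):ℝ) < (β:ℝ) by push_cast; nlinarith [h3lb])
    have hb2 : ((β:ℤ):ℝ) < 4 := by nlinarith [hq2]
    have hb2' : β < 4 := by exact_mod_cast hb2
    have : β = 3 := by omega
    subst this
    right; right; right; rfl
  · -- α = -2
    have hq2 := hQ2 (by norm_num)
    have hb1 : (0:ℤ) < β := by
      exact_mod_cast (show ((0:ℤ):ℝ) < (β:ℝ) by push_cast; nlinarith [h3nn])
    have hb2 : ((β:ℤ):ℝ) < 2 := by nlinarith [hq2]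
    have hb2' : β < 2 := by exact_mod_cast hb2
    have : β = 1 := by omega
    subst this
    right; left; rfl
  · -- α = -1
    have hq2 := hQ2 (by norm_num)
    have hb1 : (-3:ℤ) < β := by
      exact_mod_cast (show ((-3:ℤ):ℝ) < (β:ℝ) by push_cast; nlinarith [h3ub])
    have hb2 : ((β:ℤ):ℝ) < 0 := by nlinarith [hq2]
    have hb2' : β < 0 := by exact_mod_cast hb2
    have : β = -2 ∨ β = -1 := by omega
    rcases this with h | h <;> subst h
    · right; right; left; rfl
    · left; rfl

lemma mono_rev {t u : ℝ} (ht : 1 < t) (hu : 1 < u) (h : t + 1/t < u + 1/u) : t < u := by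
  by_contra h'
  push_neg at h'
  rcases eq_or_lt_of_le h' with rfl | h''
  · exact absurd h (lt_irrefl _)
  · exact absurd h (not_lt.2 (le_of_lt (mono_lemma hu h'')))


lemma rho_y (ρ : ℝ) (hρ : IsPerronRootOf ρ (quartic (-2) 0)) :
    ρ + 1/ρ = 1 + Real.sqrt 3 := by
  obtain ⟨hρ1, hρ0, -⟩ := hρ
  rw [aeval_quartic_real] at hρ0
  push_cast at hρ0
  have h3sq : Real.sqrt 3 ^ 2 = 3 := Real.sq_sqrt (by norm_num)
  have h3nn : (0:ℝ) ≤ Real.sqrt 3 := Real.sqrt_nonneg 3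
  have hρpos : (0:ℝ) < ρ := by linarith
  have hρinv : ρ * (1/ρ) = 1 := by field_simp
  have hq : (ρ + 1/ρ)^2 - 2*(ρ+1/ρ) - 2 = 0 := by
    have h2 : ρ^2 ≠ 0 := by positivity
    field_simp
    nlinarith [hρ0]
  have hgt : 2 < ρ + 1/ρ := by nlinarith [sq_nonneg (ρ-1), mul_pos (sub_pos.2 hρ1) (sub_pos.2 hρ1)]
  have hfac : (ρ + 1/ρ - 1 - Real.sqrt 3) * (ρ + 1/ρ - 1 + Real.sqrt 3) = 0 := by
    nlinarith [hq, h3sq]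
  rcases mul_eq_zero.1 hfac with h | h
  · linarith
  · nlinarith

set_option maxHeartbeats 1000000 in
lemma key (α β : ℤ) (y1 y2 : ℝ)
    (hsum : y1 + y2 = -α) (hprod : y1 * y2 = β - 2)
    (h1 : 2 < y1) (h3 : -2 < y2) (h4 : y2 < 2) :
    ∃ l : ℝ, IsPerronRootOf l (quartic α β) ∧ l + 1/l = y1 := by
  have hdnn : (0:ℝ) ≤ y1^2 - 4 := by nlinarith
  obtain ⟨d, hddef⟩ : ∃ d:ℝ, d = Real.sqrt (y1^2 - 4) := ⟨_, rfl⟩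
  have hd : d^2 = y1^2 - 4 := by rw [hddef]; exact Real.sq_sqrt hdnn
  have hd0 : 0 ≤ d := hddef ▸ Real.sqrt_nonneg _
  obtain ⟨l, hldef⟩ : ∃ l:ℝ, l = (y1 + d)/2 := ⟨_, rfl⟩
  have hl1 : 1 < l := by rw [hldef]; nlinarith
  have hl0 : (0:ℝ) < l := by linarith
  have hleq : l^2 - y1*l + 1 = 0 := by rw [hldef]; nlinarith [hd]
  have hly : l + 1/l = y1 := by
    field_simp
    nlinarith [hleq]
  have hαr : (α:ℝ) = -(y1 + y2) := by linarith
  have hβr : (β:ℝ) = 2 + y1*y2 := by linarith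
  have hαc : (α:ℂ) = -((y1:ℂ) + (y2:ℂ)) := by exact_mod_cast congrArg Complex.ofReal hαr
  have hβc : (β:ℂ) = 2 + (y1:ℂ)*(y2:ℂ) := by exact_mod_cast congrArg Complex.ofReal hβr
  refine ⟨l, ⟨hl1, ?_, ?_⟩, hly⟩
  · rw [aeval_quartic_real, hαr, hβr]
    linear_combination (l^2 - y2*l + 1) * hleq
  · intro z hz hne
    rw [aeval_quartic_complex] at hz
    have hfac : (z^2 - (y1:ℂ)*z + 1) * (z^2 - (y2:ℂ)*z + 1) = 0 := by
      rw [← hz, hαc, hβc]; ring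
    rcases mul_eq_zero.1 hfac with hcase | hcase
    · have hinv : l * (1/l) = 1 := by field_simp
      have hlyC : ((l:ℂ)) + ((1/l : ℝ):ℂ) = (y1:ℂ) := by exact_mod_cast congrArg Complex.ofReal hly
      have hinvC : ((l:ℂ)) * ((1/l : ℝ):ℂ) = 1 := by exact_mod_cast congrArg Complex.ofReal hinv
      have hz2 : (z - (l:ℂ)) * (z - ((1/l:ℝ):ℂ)) = 0 := by
        have he : (z - (l:ℂ)) * (z - ((1/l:ℝ):ℂ))
            = z^2 - ((l:ℂ) + ((1/l:ℝ):ℂ))*z + (l:ℂ)*((1/l:ℝ):ℂ) := by ring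
        rw [he, hlyC, hinvC]
        exact hcase
      rcases mul_eq_zero.1 hz2 with h | h
      · exact absurd (sub_eq_zero.1 h) hne
      · have hzval : z = ((1/l:ℝ):ℂ) := sub_eq_zero.1 h
        rw [hzval, Complex.norm_real, Real.norm_eq_abs, abs_of_pos (by positivity)]
        have : 1/l < 1 := by rw [div_lt_one hl0]; exact hl1
        linarith
    · have hre : z.re^2 - z.im^2 - y2 * z.re + 1 = 0 := by
        have := congrArg Complex.re hcase
        simp [Complex.add_re, Complex.sub_re, Complex.mul_re, pow_two] at this
        nlinarith [this]
      have him : z.im * (2*z.re - y2) = 0 := by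
        have := congrArg Complex.im hcase
        simp [Complex.add_im, Complex.sub_im, Complex.mul_im, pow_two] at this
        nlinarith [this]
      rcases mul_eq_zero.1 him with hb | hb
      · exfalso
        rw [hb] at hre
        nlinarith [hre, sq_nonneg (2*z.re - y2),
          mul_pos (show (0:ℝ) < 2 - y2 by linarith) (show (0:ℝ) < 2 + y2 by linarith)]
      · have ha : z.re = y2/2 := by linarith
        have habs : ‖z‖ = 1 := by
          rw [Complex.norm_def, Complex.normSq_apply]
          rw [show z.re*z.re + z.im*z.im = 1 by nlinarith [hre, ha]]
          exact Real.sqrt_one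
        rw [habs]; exact hl1

theorem stmt6 (ρ : ℝ) (hρ : IsPerronRootOf ρ (quartic (-2) 0)) :
    (∀ α β : ℤ, ∀ l : ℝ, IsPerronRootOf l (quartic α β) → l < ρ →
      (α, β) = (-1, -1) ∨ (α, β) = (-2, 1) ∨ (α, β) = (-1, -2) ∨ (α, β) = (-3, 3)) ∧
    (∀ α β : ℤ,
      ((α, β) = (-1, -1) ∨ (α, β) = (-2, 1) ∨ (α, β) = (-1, -2) ∨ (α, β) = (-3, 3)) →
      ∃ l : ℝ, IsPerronRootOf l (quartic α β) ∧ l < ρ) := by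
  have hρ1 : 1 < ρ := hρ.1
  have hyρ : ρ + 1/ρ = 1 + Real.sqrt 3 := rho_y ρ hρ
  have h3sq : Real.sqrt 3 ^ 2 = 3 := Real.sq_sqrt (by norm_num)
  have h3nn : (0:ℝ) ≤ Real.sqrt 3 := Real.sqrt_nonneg 3
  have h3lb : (1.7:ℝ) < Real.sqrt 3 := by nlinarith
  have h3ub : Real.sqrt 3 < 1.8 := by nlinarith
  have fin : ∀ (α β : ℤ) (y1 y2 : ℝ), y1 + y2 = -α → y1 * y2 = β - 2 →
      2 < y1 → y1 < 1 + Real.sqrt 3 → -2 < y2 → y2 < 2 →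
      ∃ l : ℝ, IsPerronRootOf l (quartic α β) ∧ l < ρ := by
    intro α β y1 y2 hs hp h1 h2 h3 h4
    obtain ⟨l, hl, hly⟩ := key α β y1 y2 hs hp h1 h3 h4
    refine ⟨l, hl, mono_rev hl.1 hρ1 ?_⟩
    rw [hly, hyρ]
    exact h2
  constructor
  · intro α β l hl hlρ
    apply forward α β l hl
    have h := mono_lemma hl.1 hlρ
    rw [hyρ] at h
    exact h
  · intro α β h
    rcases h with h | h | h | h <;>
      (simp only [Prod.mk.injEq] at h; obtain ⟨rfl, rfl⟩ := h)
    · -- (-1, -1) : y1 = (1+√13)/2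
      have hsq : Real.sqrt 13 ^ 2 = 13 := Real.sq_sqrt (by norm_num)
      have hnn : (0:ℝ) ≤ Real.sqrt 13 := Real.sqrt_nonneg 13
      have hlb : (3.6:ℝ) < Real.sqrt 13 := by nlinarith
      have hub : Real.sqrt 13 < 3.7 := by nlinarith
      exact fin _ _ ((1+Real.sqrt 13)/2) ((1-Real.sqrt 13)/2)
        (by push_cast; ring) (by push_cast; nlinarith [hsq])
        (by linarith) (by linarith) (by linarith) (by linarith)
    · -- (-2, 1) : y1 = 1+√2
      have hsq : Real.sqrt 2 ^ 2 = 2 := Real.sq_sqrt (by norm_num)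
      have hnn : (0:ℝ) ≤ Real.sqrt 2 := Real.sqrt_nonneg 2
      have hlb : (1.4:ℝ) < Real.sqrt 2 := by nlinarith
      have hub : Real.sqrt 2 < 1.5 := by nlinarith
      exact fin _ _ (1+Real.sqrt 2) (1-Real.sqrt 2)
        (by push_cast; ring) (by push_cast; nlinarith [hsq])
        (by linarith) (by linarith) (by linarith) (by linarith)
    · -- (-1, -2) : y1 = (1+√17)/2
      have hsq : Real.sqrt 17 ^ 2 = 17 := Real.sq_sqrt (by norm_num)
      have hnn : (0:ℝ) ≤ Real.sqrt 17 := Real.sqrt_nonneg 17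
      have hlb : (4.1:ℝ) < Real.sqrt 17 := by nlinarith
      have hub : Real.sqrt 17 < 4.2 := by nlinarith
      exact fin _ _ ((1+Real.sqrt 17)/2) ((1-Real.sqrt 17)/2)
        (by push_cast; ring) (by push_cast; nlinarith [hsq])
        (by linarith) (by linarith) (by linarith) (by linarith)
    · -- (-3, 3) : y1 = (3+√5)/2
      have hsq : Real.sqrt 5 ^ 2 = 5 := Real.sq_sqrt (by norm_num)
      have hnn : (0:ℝ) ≤ Real.sqrt 5 := Real.sqrt_nonneg 5
      have hlb : (2.2:ℝ) < Real.sqrt 5 := by nlinarith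
      have hub : Real.sqrt 5 < 2.3 := by nlinarith
      exact fin _ _ ((3+Real.sqrt 5)/2) ((3-Real.sqrt 5)/2)
        (by push_cast; ring) (by push_cast; nlinarith [hsq])
        (by linarith) (by linarith) (by linarith) (by linarith)
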